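/- arXiv:math/0206114 — 2 statements merged into one kernel-verified Lean document; each statement's English description precedes it below -/
import Mathlib

section
/- For any α ∈ ℂ, the bracket defined on the free ℂ-vector space with basis {V_n : n ∈ ℤ} by: [V_n,V_m] = (m−n)V_{n+m} if n,m both odd; [V_n,V_m] = (m−n)(V_{n+m} + α²V_{n+m−2}) if n,m both even; and [V_n,V_m] = (m−n)V_{n+m} + (m−n−1)α²V_{n+m−2} if n odd and m even (extended skew-symmetrically), satisfies the Jacobi identity. -/
noncomputable section

/-- Bilinear extension of structure constants `C` to a bracket on `ℤ →₀ ℂ`. -/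
def br (C : ℤ → ℤ → (ℤ →₀ ℂ)) (x y : ℤ →₀ ℂ) : ℤ →₀ ℂ :=
  x.sum fun n a => y.sum fun m b => (a * b) • C n m

/-- Structure constants of the genus-zero three-point Krichever-Novikov vector field
algebra (poles at `∞, α, -α`), extended skew-symmetrically by parity of the indices. -/
def knC (α : ℂ) (n m : ℤ) : ℤ →₀ ℂ :=
  if Odd n then
    if Odd m then
      Finsupp.single (n + m) ((m : ℂ) - n)
    else
      Finsupp.single (n + m) ((m : ℂ) - n)
        + Finsupp.single (n + m - 2) (((m : ℂ) - n - 1) * α ^ 2)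
  else
    if Odd m then
      -(Finsupp.single (n + m) ((n : ℂ) - m)
        + Finsupp.single (n + m - 2) (((n : ℂ) - m - 1) * α ^ 2))
    else
      Finsupp.single (n + m) ((m : ℂ) - n)
        + Finsupp.single (n + m - 2) (((m : ℂ) - n) * α ^ 2)

lemma br_zero_left (C : ℤ → ℤ → (ℤ →₀ ℂ)) (y : ℤ →₀ ℂ) : br C 0 y = 0 := by simp [br]

lemma br_zero_right (C : ℤ → ℤ → (ℤ →₀ ℂ)) (x : ℤ →₀ ℂ) : br C x 0 = 0 := by simp [br]

lemma br_add_left (C : ℤ → ℤ → (ℤ →₀ ℂ)) (x x' y : ℤ →₀ ℂ) :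
    br C (x + x') y = br C x y + br C x' y := by
  unfold br
  rw [Finsupp.sum_add_index']
  · intro n; simp
  · intro n a a'
    rw [← Finsupp.sum_add]
    exact Finsupp.sum_congr fun m _ => by rw [add_mul, add_smul]

lemma br_add_right (C : ℤ → ℤ → (ℤ →₀ ℂ)) (x y y' : ℤ →₀ ℂ) :
    br C x (y + y') = br C x y + br C x y' := by
  unfold br
  rw [← Finsupp.sum_add]
  refine Finsupp.sum_congr fun n _ => ?_
  rw [Finsupp.sum_add_index']
  · intro m; simp
  · intro m b b'; rw [mul_add, add_smul]

lemma br_neg_left (C : ℤ → ℤ → (ℤ →₀ ℂ)) (x y : ℤ →₀ ℂ) :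
    br C (-x) y = -br C x y := by
  have h := br_add_left C x (-x) y
  simp only [add_neg_cancel, br_zero_left] at h
  exact eq_neg_of_add_eq_zero_right h.symm

lemma br_smul_left (C : ℤ → ℤ → (ℤ →₀ ℂ)) (s : ℂ) (x y : ℤ →₀ ℂ) :
    br C (s • x) y = s • br C x y := by
  unfold br
  rw [Finsupp.sum_smul_index' (by intro i; simp), Finsupp.smul_sum]
  refine Finsupp.sum_congr fun n _ => ?_
  rw [Finsupp.smul_sum]
  refine Finsupp.sum_congr fun m _ => ?_
  rw [smul_eq_mul, smul_smul]
  congr 1; ring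

lemma br_single_single (C : ℤ → ℤ → (ℤ →₀ ℂ)) (n m : ℤ) (a b : ℂ) :
    br C (Finsupp.single n a) (Finsupp.single m b) = (a * b) • C n m := by
  unfold br
  rw [Finsupp.sum_single_index (by simp), Finsupp.sum_single_index (by simp)]

lemma br_single_right (C : ℤ → ℤ → (ℤ →₀ ℂ)) (x : ℤ →₀ ℂ) (p : ℤ) (c : ℂ) :
    br C x (Finsupp.single p c) = c • br C x (Finsupp.single p 1) := by
  unfold br
  rw [Finsupp.smul_sum]
  refine Finsupp.sum_congr fun n _ => ?_
  rw [Finsupp.sum_single_index (by simp), Finsupp.sum_single_index (by simp), smul_smul]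
  congr 1; ring

set_option maxHeartbeats 1000000 in
lemma jac_single (α : ℂ) (n m p : ℤ) :
    br (knC α) (knC α n m) (Finsupp.single p 1) + br (knC α) (knC α m p) (Finsupp.single n 1)
      + br (knC α) (knC α p n) (Finsupp.single m 1) = 0 := by
  rcases Int.even_or_odd n with hn | hn <;> rcases Int.even_or_odd m with hm | hm <;>
    rcases Int.even_or_odd p with hp | hp <;>
  · first | rw [Int.even_iff] at hn | rw [Int.odd_iff] at hn
    first | rw [Int.even_iff] at hm | rw [Int.odd_iff] at hm
    first | rw [Int.even_iff] at hp | rw [Int.odd_iff] at hp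
    simp only [knC, Int.odd_iff]
    split_ifs <;> try (exfalso; omega)
    simp only [br_add_left, br_neg_left, br_single_single, one_mul, mul_one]
    simp only [knC, Int.odd_iff]
    split_ifs <;> try (exfalso; omega)
    ext q
    simp only [Finsupp.coe_add, Finsupp.coe_neg, Finsupp.coe_smul, Pi.add_apply,
      Pi.neg_apply, Pi.smul_apply, Finsupp.single_apply, Finsupp.coe_zero, Pi.zero_apply,
      smul_eq_mul, mul_ite, mul_zero, mul_neg]
    ring_nf
    split_ifs <;> first | (exfalso; omega) | (push_cast; ring)

lemma regroup {M : Type*} [AddCommMonoid M] (a1 a2 b1 b2 c1 c2 : M) :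
    a1 + a2 + (b1 + b2) + (c1 + c2) = a1 + b1 + c1 + (a2 + b2 + c2) := by
  abel

/-- For any `α ∈ ℂ`, the bracket satisfies the Jacobi identity. -/
theorem kn_jacobi (α : ℂ) (x y z : ℤ →₀ ℂ) :
    br (knC α) (br (knC α) x y) z + br (knC α) (br (knC α) y z) x
      + br (knC α) (br (knC α) z x) y = 0 := by
  induction x using Finsupp.induction_linear with
  | zero => simp [br_zero_left, br_zero_right]
  | add f g hf hg =>
    simp only [br_add_left, br_add_right]
    rw [regroup, hf, hg, add_zero]
  | single n a =>
    induction y using Finsupp.induction_linear with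
    | zero => simp [br_zero_left, br_zero_right]
    | add f g hf hg =>
      simp only [br_add_left, br_add_right]
      rw [regroup, hf, hg, add_zero]
    | single m b =>
      induction z using Finsupp.induction_linear with
      | zero => simp [br_zero_left, br_zero_right]
      | add f g hf hg =>
        simp only [br_add_left, br_add_right]
        rw [regroup, hf, hg, add_zero]
      | single p c =>
        rw [br_single_single, br_single_single, br_single_single,
          br_smul_left, br_smul_left, br_smul_left,
          br_single_right _ _ p c, br_single_right _ _ n a, br_single_right _ _ m b,
          smul_smul, smul_smul, smul_smul,
          show b * c * a = a * b * c by ring,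
          show c * a * b = a * b * c by ring,
          ← smul_add, ← smul_add, jac_single, smul_zero]
end
end

section
/- The bilinear map β on L₁ defined by β(l₂, l_m) = m l_m for m ≠ 2, β(l_n, l_m) = 0 if neither n nor m equals 2 (extended skew-symmetrically), is a 2-cocycle of L₁ with values in the adjoint module whose cohomology class in H²(L₁, L₁) is non-zero, i.e., β is a cocycle and there is no linear map Φ : L₁ → L₁ with β = d₁Φ. -/
noncomputable section

/-- Index set for `L₁`: integers `n ≥ 1`. -/
abbrev PosIdx : Type := {n : ℤ // 1 ≤ n}

/-- Bilinear extension of structure constants `C` to a bracket on the free module. -/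
def brP (C : PosIdx → PosIdx → (PosIdx →₀ ℂ)) (x y : PosIdx →₀ ℂ) : PosIdx →₀ ℂ :=
  x.sum fun n a => y.sum fun m b => (a * b) • C n m

/-- Structure constants of `L₁`: `[l_n, l_m] = (m-n) l_{n+m}`. -/
def L1C (n m : PosIdx) : PosIdx →₀ ℂ :=
  Finsupp.single ⟨n.1 + m.1, by have := n.2; have := m.2; omega⟩ ((m.1 : ℂ) - (n.1 : ℂ))

/-- The cochain `β⁽³⁾`: `β(l₂,l_m) = m l_m` for `m ≠ 2`, zero if no index equals `2`,
extended skew-symmetrically. -/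
def betaC (n m : PosIdx) : PosIdx →₀ ℂ :=
  if n.1 = 2 ∧ m.1 ≠ 2 then Finsupp.single m (m.1 : ℂ)
  else if m.1 = 2 ∧ n.1 ≠ 2 then -Finsupp.single n (n.1 : ℂ)
  else 0

section Aux

variable (C : PosIdx → PosIdx → (PosIdx →₀ ℂ))

lemma brP_zero_left (y) : brP C 0 y = 0 := by simp [brP]

lemma brP_zero_right (x) : brP C x 0 = 0 := by simp [brP]

lemma brP_add_left (x x' y) : brP C (x+x') y = brP C x y + brP C x' y := by
  unfold brP
  rw [Finsupp.sum_add_index']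
  · intro n; simp
  · intro n a a'
    rw [← Finsupp.sum_add]
    congr 1; ext m b; rw [add_mul, add_smul]

lemma brP_add_right (x y y') : brP C x (y+y') = brP C x y + brP C x y' := by
  unfold brP
  rw [← Finsupp.sum_add]
  congr 1; ext n a
  rw [Finsupp.sum_add_index']
  · intro m; simp
  · intro m b b'; rw [mul_add, add_smul]

lemma brP_smul_left (c : ℂ) (x y) : brP C (c • x) y = c • brP C x y := by
  unfold brP
  rw [Finsupp.sum_smul_index (fun n => by simp), Finsupp.smul_sum]
  refine Finsupp.sum_congr fun n _ => ?_
  rw [Finsupp.smul_sum]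
  exact Finsupp.sum_congr fun m _ => by rw [mul_assoc, mul_smul]

lemma brP_smul_right (c : ℂ) (x y) : brP C x (c • y) = c • brP C x y := by
  unfold brP
  rw [Finsupp.smul_sum]
  refine Finsupp.sum_congr fun n _ => ?_
  rw [Finsupp.sum_smul_index (fun m => by simp), Finsupp.smul_sum]
  exact Finsupp.sum_congr fun m _ => by rw [mul_left_comm, mul_smul]

lemma brP_ss (n m : PosIdx) (a b : ℂ) :
    brP C (Finsupp.single n a) (Finsupp.single m b) = (a*b) • C n m := by
  unfold brP
  rw [Finsupp.sum_single_index (by simp), Finsupp.sum_single_index (by simp)]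

lemma brP_left_single (v : PosIdx →₀ ℂ) (n : PosIdx) :
    brP C (Finsupp.single n 1) v = v.sum fun p c => c • C n p := by
  unfold brP
  rw [Finsupp.sum_single_index (by simp)]
  exact Finsupp.sum_congr fun p _ => by rw [one_mul]

lemma brP_right_single (v : PosIdx →₀ ℂ) (m : PosIdx) :
    brP C v (Finsupp.single m 1) = v.sum fun p c => c • C p m := by
  unfold brP
  exact Finsupp.sum_congr fun p _ => by rw [Finsupp.sum_single_index (by simp), mul_one]

end Aux

lemma eval_left (v : PosIdx →₀ ℂ) (n q : PosIdx) :
    (brP L1C (Finsupp.single n 1) v) q =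
      if h : 1 ≤ q.1 - n.1 then ((q.1 - 2*n.1 : ℤ) : ℂ) * v ⟨q.1 - n.1, h⟩ else 0 := by
  rw [brP_left_single, Finsupp.sum_apply]
  unfold L1C
  split_ifs with h
  · rw [Finsupp.sum]
    rw [Finset.sum_eq_single (⟨q.1 - n.1, h⟩ : PosIdx)]
    · rw [Finsupp.smul_apply, Finsupp.single_apply]
      rw [if_pos (by ext; simp)]
      simp only [smul_eq_mul]
      push_cast
      ring
    · intro p _ hp
      rw [Finsupp.smul_apply, Finsupp.single_apply, if_neg, smul_zero]
      intro hc
      apply hp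
      ext
      have := congrArg Subtype.val hc
      simp at this ⊢
      omega
    · intro hns
      rw [Finsupp.notMem_support_iff.mp hns, zero_smul]
      simp
  · apply Finset.sum_eq_zero
    intro p _
    simp only [Finsupp.smul_apply, Finsupp.single_apply]
    rw [if_neg, smul_zero]
    intro hc
    have h2 := p.2
    have h3 : n.1 + p.1 = q.1 := congrArg Subtype.val hc
    omega

lemma eval_right (v : PosIdx →₀ ℂ) (m q : PosIdx) :
    (brP L1C v (Finsupp.single m 1)) q =
      if h : 1 ≤ q.1 - m.1 then ((2*m.1 - q.1 : ℤ) : ℂ) * v ⟨q.1 - m.1, h⟩ else 0 := by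
  rw [brP_right_single, Finsupp.sum_apply]
  unfold L1C
  split_ifs with h
  · rw [Finsupp.sum]
    rw [Finset.sum_eq_single (⟨q.1 - m.1, h⟩ : PosIdx)]
    · rw [Finsupp.smul_apply, Finsupp.single_apply]
      rw [if_pos (by ext; simp)]
      simp only [smul_eq_mul]
      push_cast
      ring
    · intro p _ hp
      rw [Finsupp.smul_apply, Finsupp.single_apply, if_neg, smul_zero]
      intro hc
      apply hp
      ext
      have := congrArg Subtype.val hc
      simp at this ⊢
      omega
    · intro hns
      rw [Finsupp.notMem_support_iff.mp hns, zero_smul]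
      simp
  · apply Finset.sum_eq_zero
    intro p _
    simp only [Finsupp.smul_apply, Finsupp.single_apply]
    rw [if_neg, smul_zero]
    intro hc
    have h2 := p.2
    have h3 : p.1 + m.1 = q.1 := congrArg Subtype.val hc
    omega

/-- Integer-level version of `betaC`'s coefficients. -/
def Bf (n m q : ℤ) : ℤ :=
  if n = 2 ∧ m ≠ 2 ∧ q = m then m
  else if m = 2 ∧ n ≠ 2 ∧ q = n then -n
  else 0

lemma Bf_left {n m : ℤ} (q : ℤ) (h : n = 2) (h2 : m ≠ 2) :
    Bf n m q = if q = m then m else 0 := by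
  simp [Bf, h, h2]

lemma Bf_right {n m : ℤ} (q : ℤ) (h : m = 2) (h2 : n ≠ 2) :
    Bf n m q = if q = n then -n else 0 := by
  simp [Bf, h, h2]

lemma Bf_zero {n m : ℤ} (q : ℤ) (h : n ≠ 2) (h2 : m ≠ 2) : Bf n m q = 0 := by
  simp [Bf, h, h2]

lemma Bf_zero2 {n m : ℤ} (q : ℤ) (h : n = 2) (h2 : m = 2) : Bf n m q = 0 := by
  simp [Bf, h, h2]

lemma Bf_nonpos {m k q : ℤ} (hq : q ≤ 0) (hm : 1 ≤ m) (hk : 1 ≤ k) : Bf m k q = 0 := by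
  unfold Bf; split_ifs <;> omega

lemma betaC_apply (n m q : PosIdx) : (betaC n m) q = ((Bf n.1 m.1 q.1 : ℤ) : ℂ) := by
  unfold betaC Bf
  split_ifs <;> simp_all [Finsupp.single_apply, Subtype.ext_iff] <;> omega

set_option maxHeartbeats 1000000 in
/-- The integer-level cocycle identity. -/
lemma intkey (n m k q : ℤ) (hn : 1 ≤ n) (hm : 1 ≤ m) (hk : 1 ≤ k) (_hq : 1 ≤ q) :
    (m-n) * Bf (n+m) k q + (k-m) * Bf (m+k) n q + (n-k) * Bf (k+n) m q
      - (q-2*n) * Bf m k (q-n) - (q-2*m) * Bf k n (q-m) - (q-2*k) * Bf n m (q-k) = 0 := by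
  have tri : ∀ x : ℤ, 1 ≤ x → x = 1 ∨ x = 2 ∨ 3 ≤ x := by omega
  rcases tri n hn with rfl|rfl|hn3 <;> rcases tri m hm with rfl|rfl|hm3 <;>
      rcases tri k hk with rfl|rfl|hk3 <;>
    (repeat' first
      | rw [Bf_zero _ (by omega) (by omega)]
      | rw [Bf_zero2 _ (by omega) (by omega)]
      | rw [Bf_left _ (by omega) (by omega)]
      | rw [Bf_right _ (by omega) (by omega)]) <;>
    ((try split_ifs) <;> first | omega | (subst_vars; first | ring | omega))

lemma eval_term (n m k q : PosIdx) :
    (brP L1C (Finsupp.single n 1) (betaC m k)) q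
      = ((q.1 - 2*n.1 : ℤ) : ℂ) * ((Bf m.1 k.1 (q.1 - n.1) : ℤ) : ℂ) := by
  rw [eval_left]
  split_ifs with h
  · rw [betaC_apply]
  · rw [Bf_nonpos (by omega) m.2 k.2]
    simp

/-- The full expression of the cocycle identity. -/
def Ee (x y z : PosIdx →₀ ℂ) : PosIdx →₀ ℂ :=
  brP betaC (brP L1C x y) z + brP betaC (brP L1C y z) x + brP betaC (brP L1C z x) y
    - brP L1C x (brP betaC y z) - brP L1C y (brP betaC z x)
    - brP L1C z (brP betaC x y)

lemma key (n m k : PosIdx) (a b c : ℂ) :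
    Ee (Finsupp.single n a) (Finsupp.single m b) (Finsupp.single k c) = 0 := by
  unfold Ee
  have hs : ∀ (p : PosIdx) (t : ℂ), Finsupp.single p t = t • Finsupp.single p (1:ℂ) := by
    intro p t; rw [Finsupp.smul_single', mul_one]
  simp only [brP_ss, L1C, Finsupp.smul_single', brP_smul_left, brP_smul_right]
  rw [hs n a, hs m b, hs k c]
  simp only [brP_smul_left, brP_ss]
  ext q
  simp only [Finsupp.coe_add, Finsupp.coe_sub, Pi.add_apply, Pi.sub_apply,
    Finsupp.smul_apply, smul_eq_mul, Finsupp.coe_zero, Pi.zero_apply]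
  rw [betaC_apply, betaC_apply, betaC_apply, eval_term, eval_term, eval_term]
  have I := intkey n.1 m.1 k.1 q.1 n.2 m.2 k.2 q.2
  have IC : ((((m.1-n.1) * Bf (n.1+m.1) k.1 q.1 + (k.1-m.1) * Bf (m.1+k.1) n.1 q.1
      + (n.1-k.1) * Bf (k.1+n.1) m.1 q.1
      - (q.1-2*n.1) * Bf m.1 k.1 (q.1-n.1) - (q.1-2*m.1) * Bf k.1 n.1 (q.1-m.1)
      - (q.1-2*k.1) * Bf n.1 m.1 (q.1-k.1) : ℤ)) : ℂ) = 0 := by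
    rw [I]; simp
  push_cast at IC ⊢
  linear_combination (a*b*c) * IC

lemma Ee_zero1 (y z) : Ee 0 y z = 0 := by
  simp [Ee, brP_zero_left, brP_zero_right]

lemma Ee_zero2 (x z) : Ee x 0 z = 0 := by
  simp [Ee, brP_zero_left, brP_zero_right]

lemma Ee_zero3 (x y) : Ee x y 0 = 0 := by
  simp [Ee, brP_zero_left, brP_zero_right]

lemma Ee_add1 (f g y z) : Ee (f + g) y z = Ee f y z + Ee g y z := by
  unfold Ee
  simp only [brP_add_left, brP_add_right]
  abel

lemma Ee_add2 (x f g z) : Ee x (f + g) z = Ee x f z + Ee x g z := by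
  unfold Ee
  simp only [brP_add_left, brP_add_right]
  abel

lemma Ee_add3 (x y f g) : Ee x y (f + g) = Ee x y f + Ee x y g := by
  unfold Ee
  simp only [brP_add_left, brP_add_right]
  abel

lemma part1 (x y z : PosIdx →₀ ℂ) : Ee x y z = 0 := by
  induction x using Finsupp.induction_linear with
  | zero => exact Ee_zero1 y z
  | add f g hf hg => rw [Ee_add1, hf, hg, add_zero]
  | single n a =>
    induction y using Finsupp.induction_linear with
    | zero => exact Ee_zero2 _ z
    | add f g hf hg => rw [Ee_add2, hf, hg, add_zero]
    | single m b =>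
      induction z using Finsupp.induction_linear with
      | zero => exact Ee_zero3 _ _
      | add f g hf hg => rw [Ee_add3, hf, hg, add_zero]
      | single k c => exact key n m k a b c

/-- `β` is a 2-cocycle of `L₁` with values in the adjoint module, and it is not a
coboundary: its class in `H²(L₁,L₁)` is nonzero. -/
theorem beta_cocycle_not_coboundary :
    (∀ x y z : PosIdx →₀ ℂ,
      brP betaC (brP L1C x y) z + brP betaC (brP L1C y z) x + brP betaC (brP L1C z x) y
        - brP L1C x (brP betaC y z) - brP L1C y (brP betaC z x)
        - brP L1C z (brP betaC x y) = 0) ∧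
    ¬ ∃ Φ : (PosIdx →₀ ℂ) →ₗ[ℂ] (PosIdx →₀ ℂ),
        ∀ x y : PosIdx →₀ ℂ,
          brP betaC x y = Φ (brP L1C x y) - brP L1C (Φ x) y - brP L1C x (Φ y) := by
  constructor
  · exact fun x y z => part1 x y z
  · rintro ⟨Φ, h⟩
    have key : ∀ (n m q : ℤ) (hn : 1 ≤ n) (hm : 1 ≤ m) (hq : 1 ≤ q) (hnm : 1 ≤ n + m),
        (betaC ⟨n,hn⟩ ⟨m,hm⟩) ⟨q,hq⟩ =
          ((m : ℂ) - (n : ℂ)) * (Φ (Finsupp.single ⟨n+m,hnm⟩ 1)) ⟨q,hq⟩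
          - (if h1 : 1 ≤ q - m then
              ((2*m - q : ℤ) : ℂ) * (Φ (Finsupp.single ⟨n,hn⟩ 1)) ⟨q-m,h1⟩ else 0)
          - (if h2 : 1 ≤ q - n then
              ((q - 2*n : ℤ) : ℂ) * (Φ (Finsupp.single ⟨m,hm⟩ 1)) ⟨q-n,h2⟩ else 0) := by
      intro n m q hn hm hq hnm
      have h0 := h (Finsupp.single ⟨n,hn⟩ 1) (Finsupp.single ⟨m,hm⟩ 1)
      rw [brP_ss, brP_ss, one_mul, one_smul, one_smul] at h0
      rw [show L1C ⟨n,hn⟩ ⟨m,hm⟩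
          = ((m:ℂ) - (n:ℂ)) • Finsupp.single (⟨n+m, hnm⟩ : PosIdx) (1:ℂ) from
          (by rw [L1C, Finsupp.smul_single', mul_one]), map_smul] at h0
      have h1 := congrArg (fun v : PosIdx →₀ ℂ => v ⟨q,hq⟩) h0
      simp only [Finsupp.sub_apply, Finsupp.smul_apply, smul_eq_mul] at h1
      rw [eval_right, eval_left] at h1
      exact h1
    have E1 := key 2 1 1 (by norm_num) (by norm_num) (by norm_num) (by norm_num)
    have E2 := key 2 3 3 (by norm_num) (by norm_num) (by norm_num) (by norm_num)
    have E3 := key 1 3 2 (by norm_num) (by norm_num) (by norm_num) (by norm_num)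
    have E4 := key 1 4 3 (by norm_num) (by norm_num) (by norm_num) (by norm_num)
    norm_num [betaC, Finsupp.single_apply] at E1 E2 E3 E4
    have contra : (12:ℂ) = 0 := by linear_combination 3*E1 + 3*E2 + E3 - E4
    norm_num at contra
end
end
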